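/- arXiv:2401.03651 — 2 statements merged into one kernel-verified Lean document; each statement's English description precedes it below -/
import Mathlib

section
/- If v^{k+1} = v^k - M(v^k - ṽ^k), H = QM^{-1} is symmetric, and G = Q^T + Q - M^T H M, then for all v: (v - ṽ^k)^T Q (v^k - ṽ^k) = (1/2)(||v - v^{k+1}||_H^2 - ||v - v^k||_H^2) + (1/2)||v^k - ṽ^k||_G^2. -/
open Matrix

theorem stmt_4 {N : ℕ} (M Q H G : Matrix (Fin N) (Fin N) ℝ)
    (hMinv : IsUnit M.det)
    (hH : H = Q * M⁻¹) (hHsymm : H.IsSymm)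
    (hG : G = Qᵀ + Q - Mᵀ * H * M)
    (vk vt : Fin N → ℝ) (vk1 : Fin N → ℝ)
    (hv : vk1 = vk - M.mulVec (vk - vt)) :
    ∀ v : Fin N → ℝ,
      (v - vt) ⬝ᵥ Q.mulVec (vk - vt) =
        (1/2) * ((v - vk1) ⬝ᵥ H.mulVec (v - vk1) - (v - vk) ⬝ᵥ H.mulVec (v - vk)) +
        (1/2) * ((vk - vt) ⬝ᵥ G.mulVec (vk - vt)) := by
  intro v
  have hQ : Q = H * M := by
    rw [hH, Matrix.mul_assoc, Matrix.nonsing_inv_mul M hMinv, Matrix.mul_one]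
  have hsym : ∀ x y : Fin N → ℝ, x ⬝ᵥ H.mulVec y = y ⬝ᵥ H.mulVec x := by
    intro x y
    rw [Matrix.dotProduct_mulVec, ← Matrix.mulVec_transpose, hHsymm.eq,
      dotProduct_comm]
  set w := vk - vt with hw
  set a := v - vk with ha
  have h1 : v - vt = a + w := by rw [ha, hw]; abel
  have h2 : v - vk1 = a + M.mulVec w := by rw [hv, ha]; abel
  have htr : ∀ x y : Fin N → ℝ, x ⬝ᵥ (Mᵀ).mulVec y = (M.mulVec x) ⬝ᵥ y := by
    intro x y
    rw [Matrix.dotProduct_mulVec, Matrix.vecMul_transpose]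
  rw [h1, h2, hQ, hG, hQ]
  simp only [Matrix.transpose_mul, hHsymm.eq, Matrix.add_mulVec, Matrix.sub_mulVec,
    Matrix.mulVec_add, ← Matrix.mulVec_mulVec, dotProduct_add, add_dotProduct,
    dotProduct_sub]
  ring_nf
  linarith [hsym a (M.mulVec w), hsym w (M.mulVec w), hsym (M.mulVec w) a,
    hsym (M.mulVec w) w, htr w (H.mulVec (M.mulVec w)), htr w (H.mulVec w)]
end

section
/- For γ ∈ (1,2), if (λ - λ̂)^T B(y - ỹ) ≥ 0 where λ̂ := λ - β(Ax̃ + Bỹ - b), then the quadratic form ||(y-ỹ, λ-λ̃)||_G² with λ̃ := λ - β(Ax̃ + By - b) satisfies ||(y-ỹ, λ-λ̃)||_G² ≥ ((2-γ)/γ²)β||B(y - y⁺)||² + ((2-γ)/(γ²β))||λ - λ⁺||², where y⁺ := y - γ(y-ỹ) and λ⁺ := λ - γ(λ-λ̂). -/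
open Matrix

theorem stmt_9 {m n₁ n₂ : ℕ} (A : Matrix (Fin m) (Fin n₁) ℝ)
    (B : Matrix (Fin m) (Fin n₂) ℝ) (b : Fin m → ℝ) (β γ : ℝ) (hβ : 0 < β)
    (hγ : γ ∈ Set.Ioo (1 : ℝ) 2)
    (xt : Fin n₁ → ℝ) (y yt : Fin n₂ → ℝ) (lam : Fin m → ℝ)
    (lamhat lamtil : Fin m → ℝ)
    (hhat : lamhat = lam - β • (A.mulVec xt + B.mulVec yt - b))
    (htil : lamtil = lam - β • (A.mulVec xt + B.mulVec y - b))
    (hcrit : 0 ≤ (lam - lamhat) ⬝ᵥ (B.mulVec (y - yt)))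
    (G : Matrix (Fin n₂ ⊕ Fin m) (Fin n₂ ⊕ Fin m) ℝ)
    (hG : G = Matrix.fromBlocks (((2 - 2 * γ) * β) • (Bᵀ * B)) ((γ - 1) • Bᵀ)
      ((γ - 1) • B) (((2 - γ) / β) • 1))
    (yplus : Fin n₂ → ℝ) (hyplus : yplus = y - γ • (y - yt))
    (lamplus : Fin m → ℝ) (hlamplus : lamplus = lam - γ • (lam - lamhat)) :
    ((2 - γ) / γ ^ 2) * β * ((B.mulVec (y - yplus)) ⬝ᵥ (B.mulVec (y - yplus))) +
      ((2 - γ) / (γ ^ 2 * β)) * ((lam - lamplus) ⬝ᵥ (lam - lamplus)) ≤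
    (Sum.elim (y - yt) (lam - lamtil)) ⬝ᵥ G.mulVec (Sum.elim (y - yt) (lam - lamtil)) := by
  obtain ⟨hγ1, hγ2⟩ := hγ
  subst hhat htil hG hyplus hlamplus
  set u := y - yt with hu
  set p := A.mulVec xt + B.mulVec yt - b with hp
  have hq : A.mulVec xt + B.mulVec y - b = p + B.mulVec u := by
    rw [hp, hu, Matrix.mulVec_sub]; abel
  have h1 : lam - (lam - β • p) = β • p := sub_sub_cancel _ _
  have h2 : lam - (lam - β • (p + B.mulVec u)) = β • (p + B.mulVec u) := sub_sub_cancel _ _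
  have h3 : y - (y - γ • u) = γ • u := sub_sub_cancel _ _
  rw [hq, h2, h1, h3, sub_sub_cancel]
  have key : ∀ x : Fin m → ℝ, u ⬝ᵥ Bᵀ.mulVec x = B.mulVec u ⬝ᵥ x := fun x => by
    rw [Matrix.dotProduct_mulVec, Matrix.vecMul_transpose]
  have key2 : u ⬝ᵥ (Bᵀ * B).mulVec u = B.mulVec u ⬝ᵥ B.mulVec u := by
    rw [← Matrix.mulVec_mulVec, key]
  rw [h1, smul_dotProduct] at hcrit
  have hc : 0 ≤ p ⬝ᵥ B.mulVec u := nonneg_of_mul_nonneg_right hcrit hβ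
  have hcomm : B.mulVec u ⬝ᵥ p = p ⬝ᵥ B.mulVec u := dotProduct_comm _ _
  simp only [Matrix.fromBlocks_mulVec, sumElim_dotProduct_sumElim,
    Matrix.mulVec_smul, Matrix.smul_mulVec, Matrix.mulVec_add,
    add_dotProduct, dotProduct_add, smul_dotProduct,
    dotProduct_smul, Matrix.one_mulVec, smul_eq_mul, Sum.elim_comp_inl, Sum.elim_comp_inr, key, key2, hcomm]
  set s := B.mulVec u ⬝ᵥ B.mulVec u with hs
  set c := p ⬝ᵥ B.mulVec u with hc2
  set t := p ⬝ᵥ p with ht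
  have hγ0 : γ ≠ 0 := by linarith
  have hβ0 : β ≠ 0 := ne_of_gt hβ
  field_simp
  simp only [key2, hcomm, ← hs, ← ht, ← hc2] at *
  have hkey : 0 ≤ 2*c*β^3*γ^4 := by positivity
  nlinarith [hkey]
end
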